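/- Let d ∈ ℕ, k₁,…,k_d, m ∈ ℕ, and 1 ≤ q_j < ∞. Let G be the group of signed-permutation operators acting on ℝ^{k₁⋯k_d}. For each g ∈ G, let y_g ∈ L for a fixed n-dimensional subspace L. Then |(1/|G|) ∑_{g∈G} ⟨g(x̂), y_g⟩| ≤ (n^{1/2}(s₁⋯s_d)^{1/2}/(k₁⋯k_d)^{1/2}) · ((1/|G|)∑_{g∈G} ‖y_g‖₂²)^{1/2}, where x̂ = x̂(s̄) is the indicator vector of the box ∏_j{1,…,s_j} and ⟨·,·⟩ is the Euclidean inner product. -/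

import Mathlib

open scoped BigOperators

/-- The group `G` of signed coordinate permutations: a tuple of permutations `σ_j` of
`{1,…,k_j}` and signs `ε_{j,i} ∈ {±1}` (encoded by `Bool`). -/
abbrev SignPerm {d : ℕ} (k : Fin d → ℕ) :=
  (∀ i, Equiv.Perm (Fin (k i))) × (∀ i, Fin (k i) → Bool)

/-- The action `g(x)_{i₁,…,i_d} = ε_{1,i₁}⋯ε_{d,i_d} x_{σ₁(i₁),…,σ_d(i_d)}`. -/
noncomputable def actSP {d : ℕ} (k : Fin d → ℕ) (g : SignPerm k)
    (x : (∀ i, Fin (k i)) → ℝ) : (∀ i, Fin (k i)) → ℝ :=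
  fun v => (∏ i, (if g.2 i (v i) then (1 : ℝ) else -1)) * x (fun i => g.1 i (v i))

/-- The indicator vector `x̂(s̄)` of the box `∏_j {1,…,s_j}`. -/
noncomputable def boxIndicator {d : ℕ} (k s : Fin d → ℕ) : (∀ i, Fin (k i)) → ℝ :=
  fun v => if ∀ i, (v i : ℕ) < s i then 1 else 0


lemma gk_sign_sum {m : ℕ} (a b : Fin m) :
    ∑ e : Fin m → Bool, ((if e a then (1:ℝ) else -1) * (if e b then (1:ℝ) else -1)) =
      if a = b then ((2:ℝ)^m) else 0 := by
  classical
  rcases eq_or_ne a b with rfl | hab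
  · rw [if_pos rfl]
    have h1 : ∀ e : Fin m → Bool,
        (if e a then (1:ℝ) else -1) * (if e a then (1:ℝ) else -1) = 1 := by
      intro e; by_cases h : e a <;> simp [h]
    rw [Finset.sum_congr rfl (fun e _ => h1 e), Finset.sum_const]
    simp [Fintype.card_fun]
  · rw [if_neg hab]
    refine Finset.sum_ninvolution (fun e => Function.update e a (!(e a))) ?_ ?_
      (fun _ => Finset.mem_univ _) ?_
    · intro e
      rw [Function.update_self, Function.update_of_ne (Ne.symm hab)]
      by_cases h : e a <;> by_cases h' : e b <;> simp [h, h']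
    · intro e _ h
      have := congrFun h a
      rw [Function.update_self] at this
      simp at this
    · intro e
      rw [Function.update_self]
      simp [Function.update_idem]

lemma gk_perm_sum_eval {m : ℕ} (v : Fin (m+1)) (f : Fin (m+1) → ℝ) :
    ∑ σ : Equiv.Perm (Fin (m+1)), f (σ v) = (Nat.factorial m : ℝ) * ∑ t, f t := by
  classical
  have h0 : ∑ σ : Equiv.Perm (Fin (m+1)), f (σ v) = ∑ σ : Equiv.Perm (Fin (m+1)), f (σ 0) := by
    refine Fintype.sum_bijective (fun σ => σ * Equiv.swap 0 v)
      (Group.mulRight_bijective _) _ _ ?_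
    intro σ
    simp [Equiv.Perm.mul_apply]
  rw [h0, ← Equiv.sum_comp (Equiv.Perm.decomposeFin.symm) (fun σ => f (σ 0)),
    Fintype.sum_prod_type]
  simp only [Equiv.Perm.decomposeFin_symm_apply_zero, Finset.sum_const, Finset.card_univ,
    Fintype.card_perm, Fintype.card_fin, nsmul_eq_mul, Finset.mul_sum]


lemma gk_perm_count {m : ℕ} (v : Fin m) {t : ℕ} (ht : t ≤ m) :
    ∑ σ : Equiv.Perm (Fin m), (if ((σ v : ℕ)) < t then (1:ℝ) else 0) =
      (Nat.factorial m : ℝ) * t / m := by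
  classical
  obtain _|m := m
  · exact v.elim0
  rw [gk_perm_sum_eval v (fun x => if (x:ℕ) < t then (1:ℝ) else 0)]
  have hcard : (Finset.univ.filter (fun t' : Fin (m+1) => (t' : ℕ) < t)).card = t := by
    refine Finset.card_eq_of_bijective (fun i hi => ⟨i, lt_of_lt_of_le hi ht⟩) ?_ ?_ ?_
    · intro a ha
      simp only [Finset.mem_filter] at ha
      exact ⟨a, ha.2, by simp⟩
    · intro i hi
      simp [hi]
    · intro i j hi hj h
      simpa using congrArg (fun x : Fin (m+1) => (x:ℕ)) h
  have hcount : ∑ t' : Fin (m+1), (if (t' : ℕ) < t then (1:ℝ) else 0) = t := by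
    rw [Finset.sum_boole, hcard]
  rw [hcount, Nat.factorial_succ]
  push_cast
  field_simp

lemma gk_box_sq {d : ℕ} (k s : Fin d → ℕ) (z : ∀ i, Fin (k i)) :
    boxIndicator k s z * boxIndicator k s z = boxIndicator k s z := by
  unfold boxIndicator; split <;> norm_num

lemma gk_box_prod {d : ℕ} (k s : Fin d → ℕ) (z : ∀ i, Fin (k i)) :
    boxIndicator k s z = ∏ j, (if ((z j : ℕ)) < s j then (1:ℝ) else 0) := by
  rw [Finset.prod_boole, boxIndicator]
  simp

lemma gk_pair_sum {d : ℕ} (k s : Fin d → ℕ) (hsk : ∀ j, s j ≤ k j) (v w : ∀ i, Fin (k i)) :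
    ∑ g : SignPerm k, actSP k g (boxIndicator k s) v * actSP k g (boxIndicator k s) w =
      if v = w then (∏ j, (2:ℝ)^(k j)) * (∏ j, ((Nat.factorial (k j) : ℝ) * (s j) / (k j)))
      else 0 := by
  classical
  rw [Fintype.sum_prod_type]
  have h1 : ∀ (σ : ∀ i, Equiv.Perm (Fin (k i))) (ε : ∀ i, Fin (k i) → Bool),
      actSP k (σ, ε) (boxIndicator k s) v * actSP k (σ, ε) (boxIndicator k s) w =
        (∏ j, ((if ε j (v j) then (1:ℝ) else -1) * (if ε j (w j) then (1:ℝ) else -1))) *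
          (boxIndicator k s (fun j => σ j (v j)) * boxIndicator k s (fun j => σ j (w j))) := by
    intro σ ε
    simp only [actSP, Finset.prod_mul_distrib]
    ring
  simp_rw [h1]
  have hsig : (∑ ε : ∀ i, Fin (k i) → Bool,
        ∏ j, ((if ε j (v j) then (1:ℝ) else -1) * (if ε j (w j) then (1:ℝ) else -1))) =
      ∏ j, (if v j = w j then ((2:ℝ)^(k j)) else 0) := by
    rw [← Fintype.prod_sum
      (fun j (e : Fin (k j) → Bool) => ((if e (v j) then (1:ℝ) else -1) * (if e (w j) then (1:ℝ) else -1)))]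
    exact Finset.prod_congr rfl fun j _ => gk_sign_sum (v j) (w j)
  have h2 : ∀ σ : ∀ i, Equiv.Perm (Fin (k i)),
      ∑ ε : ∀ i, Fin (k i) → Bool,
        (∏ j, ((if ε j (v j) then (1:ℝ) else -1) * (if ε j (w j) then (1:ℝ) else -1))) *
          (boxIndicator k s (fun j => σ j (v j)) * boxIndicator k s (fun j => σ j (w j))) =
        (∏ j, (if v j = w j then ((2:ℝ)^(k j)) else 0)) *
          (boxIndicator k s (fun j => σ j (v j)) * boxIndicator k s (fun j => σ j (w j))) := by
    intro σ
    rw [← Finset.sum_mul, hsig]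
  simp_rw [h2]
  rcases eq_or_ne v w with rfl | hvw
  · rw [← Finset.mul_sum]
    have e1 : (∏ j, (if v j = v j then ((2:ℝ)^(k j)) else 0)) = ∏ j, (2:ℝ)^(k j) :=
      Finset.prod_congr rfl fun j _ => if_pos rfl
    have e2 : (∑ σ : ∀ i, Equiv.Perm (Fin (k i)),
          boxIndicator k s (fun j => σ j (v j)) * boxIndicator k s (fun j => σ j (v j))) =
        ∏ j, ((Nat.factorial (k j) : ℝ) * (s j) / (k j)) := by
      simp_rw [gk_box_sq]
      have h3 : ∀ σ : ∀ i, Equiv.Perm (Fin (k i)),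
          boxIndicator k s (fun j => σ j (v j)) =
            ∏ j, (if ((σ j (v j) : ℕ)) < s j then (1:ℝ) else 0) :=
        fun σ => gk_box_prod k s _
      simp_rw [h3]
      rw [← Fintype.prod_sum
        (fun j (σj : Equiv.Perm (Fin (k j))) => (if ((σj (v j) : ℕ)) < s j then (1:ℝ) else 0))]
      exact Finset.prod_congr rfl fun j _ => gk_perm_count (v j) (hsk j)
    rw [e1, e2, if_pos rfl]
  · rw [if_neg hvw]
    obtain ⟨j, hj⟩ := Function.ne_iff.mp hvw
    have hz : (∏ j, (if v j = w j then ((2:ℝ)^(k j)) else 0)) = 0 :=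
      Finset.prod_eq_zero (Finset.mem_univ j) (by rw [if_neg hj])
    simp [hz]

lemma gk_card_signperm {d : ℕ} (k : Fin d → ℕ) :
    (Fintype.card (SignPerm k) : ℝ) = (∏ j, (Nat.factorial (k j) : ℝ)) * ∏ j, (2:ℝ)^(k j) := by
  rw [Fintype.card_prod, Fintype.card_pi, Fintype.card_pi]
  push_cast
  congr 1
  · exact Finset.prod_congr rfl fun j _ => by rw [Fintype.card_perm, Fintype.card_fin]
  · exact Finset.prod_congr rfl fun j _ => by
      rw [Fintype.card_fun, Fintype.card_bool, Fintype.card_fin]; push_cast; ring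

lemma gk_exp_sq {d : ℕ} (k s : Fin d → ℕ) (hs1 : ∀ j, 1 ≤ s j) (hsk : ∀ j, s j ≤ k j)
    (u : (∀ i, Fin (k i)) → ℝ) :
    ∑ g : SignPerm k, (∑ v, actSP k g (boxIndicator k s) v * u v) ^ 2 =
      (Fintype.card (SignPerm k) : ℝ) * (∏ j, ((s j : ℝ) / (k j : ℝ))) * ∑ v, (u v)^2 := by
  classical
  have expand : ∀ g : SignPerm k, (∑ v, actSP k g (boxIndicator k s) v * u v) ^ 2 =
      ∑ v, ∑ w, (actSP k g (boxIndicator k s) v * actSP k g (boxIndicator k s) w) *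
        (u v * u w) := by
    intro g
    rw [sq, Finset.sum_mul_sum]
    exact Finset.sum_congr rfl fun v _ => Finset.sum_congr rfl fun w _ => by ring
  simp_rw [expand]
  rw [Finset.sum_comm]
  have swap2 : ∀ v, ∑ g : SignPerm k, ∑ w,
      (actSP k g (boxIndicator k s) v * actSP k g (boxIndicator k s) w) * (u v * u w) =
      ∑ w, (∑ g : SignPerm k,
        actSP k g (boxIndicator k s) v * actSP k g (boxIndicator k s) w) * (u v * u w) := by
    intro v
    rw [Finset.sum_comm]
    exact Finset.sum_congr rfl fun w _ => by rw [← Finset.sum_mul]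
  simp_rw [swap2, gk_pair_sum k s hsk, ite_mul, zero_mul, Finset.sum_ite_eq]
  simp only [Finset.mem_univ, if_pos]
  have hC : (∏ j, (2:ℝ)^(k j)) * (∏ j, ((Nat.factorial (k j) : ℝ) * (s j) / (k j))) =
      (Fintype.card (SignPerm k) : ℝ) * (∏ j, ((s j : ℝ) / (k j : ℝ))) := by
    rw [gk_card_signperm]
    have hmd : ∀ j, (Nat.factorial (k j):ℝ) * (s j) / (k j) =
        (Nat.factorial (k j):ℝ) * ((s j:ℝ)/(k j)) := fun j => by rw [mul_div_assoc]
    simp_rw [hmd]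
    rw [Finset.prod_mul_distrib]
    ring
  rw [← hC, Finset.mul_sum]
  exact Finset.sum_congr rfl fun v _ => by ring

lemma gk_alg (sN sPk Ps cn T : ℝ) (hsN : 0 < sN) (hsPk : 0 < sPk)
    (hPs : 0 ≤ Ps) (hcn : 0 ≤ cn) (hT : 0 ≤ T) :
    (1/(sN^2)) * (Real.sqrt ((sN^2) * (Ps/(sPk^2)) * cn) * Real.sqrt T) =
      Real.sqrt cn * Real.sqrt Ps / Real.sqrt (sPk^2) * Real.sqrt ((1/(sN^2)) * T) := by
  have h1 : (sN^2) * (Ps/(sPk^2)) * cn = (sN/sPk * Real.sqrt Ps * Real.sqrt cn)^2 := by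
    rw [mul_pow, mul_pow, Real.sq_sqrt hPs, Real.sq_sqrt hcn, div_pow]
    ring
  have h2 : (1/(sN^2)) * T = (Real.sqrt T / sN)^2 := by
    rw [div_pow, Real.sq_sqrt hT]
    ring
  rw [h1, h2, Real.sqrt_sq (by positivity), Real.sqrt_sq (by positivity), Real.sqrt_sq (by positivity)]
  field_simp

/-- Gluskin's averaging estimate: for `y_g ∈ L` with `dim L = n`,
`|𝔼_g ⟨g(x̂), y_g⟩| ≤ √n (s₁⋯s_d)^{1/2}/(k₁⋯k_d)^{1/2} (𝔼_g ‖y_g‖₂²)^{1/2}`. -/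
theorem stmt_16 {d : ℕ} (k s : Fin d → ℕ) (hs1 : ∀ j, 1 ≤ s j) (hsk : ∀ j, s j ≤ k j)
    (n : ℕ) (L : Submodule ℝ ((∀ i, Fin (k i)) → ℝ)) (hL : Module.finrank ℝ (↥L) = n)
    (y : SignPerm k → (∀ i, Fin (k i)) → ℝ) (hy : ∀ g, y g ∈ L) :
    |(1 / (Fintype.card (SignPerm k) : ℝ)) *
        ∑ g : SignPerm k, ∑ v, actSP k g (boxIndicator k s) v * y g v| ≤
      Real.sqrt n * Real.sqrt (∏ j, (s j : ℝ)) / Real.sqrt (∏ j, (k j : ℝ)) *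
        Real.sqrt ((1 / (Fintype.card (SignPerm k) : ℝ)) *
          ∑ g : SignPerm k, ∑ v, (y g v) ^ 2) := by
  classical
  have hN : 0 < (Fintype.card (SignPerm k) : ℝ) := by
    have : 0 < Fintype.card (SignPerm k) := Fintype.card_pos
    exact_mod_cast this
  set N : ℝ := (Fintype.card (SignPerm k) : ℝ) with hNdef
  set c : ℝ := ∏ j, ((s j : ℝ) / (k j : ℝ)) with hcdef
  have hkpos : ∀ j, 0 < (k j : ℝ) := fun j => by
    have := lt_of_lt_of_le (hs1 j) (hsk j)
    exact_mod_cast this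
  have hc0 : 0 ≤ c := Finset.prod_nonneg fun j _ => by positivity
  let ψ : ((∀ i, Fin (k i)) → ℝ) ≃ₗ[ℝ] EuclideanSpace ℝ (∀ i, Fin (k i)) := (WithLp.linearEquiv 2 ℝ ((∀ i, Fin (k i)) → ℝ)).symm
  let X : SignPerm k → EuclideanSpace ℝ (∀ i, Fin (k i)) := fun g => ψ (actSP k g (boxIndicator k s))
  let Y : SignPerm k → EuclideanSpace ℝ (∀ i, Fin (k i)) := fun g => ψ (y g)
  let L' : Submodule ℝ (EuclideanSpace ℝ (∀ i, Fin (k i))) := L.map (ψ : ((∀ i, Fin (k i)) → ℝ) →ₗ[ℝ] EuclideanSpace ℝ (∀ i, Fin (k i)))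
  have hL' : Module.finrank ℝ L' = n := by
    rw [LinearEquiv.finrank_map_eq]; exact hL
  have hmemL' : ∀ g, Y g ∈ L' := fun g => Submodule.mem_map_of_mem (hy g)
  have hinner : ∀ a b : EuclideanSpace ℝ (∀ i, Fin (k i)), (inner ℝ a b : ℝ) = ∑ v, a v * b v := by
    intro a b
    rw [PiLp.inner_apply]
    simp [RCLike.inner_apply, mul_comm]
  -- orthogonal projection
  have hproj : ∀ (x : EuclideanSpace ℝ (∀ i, Fin (k i))) (w : EuclideanSpace ℝ (∀ i, Fin (k i))), w ∈ L' →
      (inner ℝ x w : ℝ) = inner ℝ ((L'.orthogonalProjection x : EuclideanSpace ℝ (∀ i, Fin (k i)))) w := by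
    intro x w hw
    have h : inner ℝ (x - (L'.orthogonalProjection x : EuclideanSpace ℝ (∀ i, Fin (k i)))) w = 0 :=
      Submodule.starProjection_inner_eq_zero (K := L') x w hw
    rw [inner_sub_left] at h
    linarith
  -- orthonormal basis of L'
  let b := stdOrthonormalBasis ℝ L'
  have hb_norm : ∀ x : EuclideanSpace ℝ (∀ i, Fin (k i)),
      ‖(L'.orthogonalProjection x : EuclideanSpace ℝ (∀ i, Fin (k i)))‖^2 =
        ∑ i, ((inner ℝ ((b i : EuclideanSpace ℝ (∀ i, Fin (k i)))) x : ℝ))^2 := by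
    intro x
    have h1 : ‖(L'.orthogonalProjection x : EuclideanSpace ℝ (∀ i, Fin (k i)))‖ =
        ‖b.repr (L'.orthogonalProjection x)‖ := by
      rw [b.repr.norm_map]; rfl
    rw [h1, EuclideanSpace.norm_eq, Real.sq_sqrt (by positivity)]
    refine Finset.sum_congr rfl fun i _ => ?_
    rw [Real.norm_eq_abs, sq_abs, b.repr_apply_apply, Submodule.coe_inner]
    rw [real_inner_comm, ← hproj x (b i) (SetLike.coe_mem _), real_inner_comm]
  -- second moment of projections
  have hbiu : ∀ i, ∑ v, ((b i : EuclideanSpace ℝ (∀ i, Fin (k i))) v)^2 = 1 := by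
    intro i
    have h1 : ‖(b i : EuclideanSpace ℝ (∀ i, Fin (k i)))‖ = 1 := b.orthonormal.1 i
    have h2 := EuclideanSpace.norm_eq (b i : EuclideanSpace ℝ (∀ i, Fin (k i)))
    rw [h1] at h2
    have h3 : (1:ℝ) = ∑ v, ‖(b i : EuclideanSpace ℝ (∀ i, Fin (k i))) v‖^2 := by
      have h4 := congrArg (fun t : ℝ => t^2) h2
      simp only [one_pow] at h4
      rwa [Real.sq_sqrt (Finset.sum_nonneg fun v _ =>
        sq_nonneg ‖(b i : EuclideanSpace ℝ (∀ i, Fin (k i))) v‖)] at h4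
    rw [h3]
    exact Finset.sum_congr rfl fun v _ => by rw [Real.norm_eq_abs, sq_abs]
  have hsum2 : ∑ g : SignPerm k, ‖(L'.orthogonalProjection (X g) : EuclideanSpace ℝ (∀ i, Fin (k i)))‖^2 =
      N * c * n := by
    simp_rw [hb_norm]
    rw [Finset.sum_comm]
    have hterm : ∀ i, ∑ g : SignPerm k, ((inner ℝ ((b i : EuclideanSpace ℝ (∀ i, Fin (k i)))) (X g) : ℝ))^2 =
        N * c := by
      intro i
      have h1 : ∀ g : SignPerm k, (inner ℝ ((b i : EuclideanSpace ℝ (∀ i, Fin (k i)))) (X g) : ℝ) =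
          ∑ v, actSP k g (boxIndicator k s) v * ((b i : EuclideanSpace ℝ (∀ i, Fin (k i))) v) := by
        intro g
        rw [hinner]
        exact Finset.sum_congr rfl fun v _ => mul_comm _ _
      simp_rw [h1]
      rw [gk_exp_sq k s hs1 hsk (fun v => (b i : EuclideanSpace ℝ (∀ i, Fin (k i))) v), hbiu i]
      rw [mul_one]
    simp_rw [hterm]
    rw [Finset.sum_const, Finset.card_univ, Fintype.card_fin, hL', nsmul_eq_mul]
    ring
  -- Cauchy-Schwarz
  have hYnorm : ∀ g, ‖Y g‖^2 = ∑ v, (y g v)^2 := by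
    intro g
    rw [EuclideanSpace.norm_eq, Real.sq_sqrt (by positivity)]
    refine Finset.sum_congr rfl fun v _ => ?_
    rw [Real.norm_eq_abs, sq_abs]
    rfl
  have hS : ∑ g : SignPerm k, ∑ v, actSP k g (boxIndicator k s) v * y g v =
      ∑ g : SignPerm k, (inner ℝ (X g) (Y g) : ℝ) := by
    refine Finset.sum_congr rfl fun g _ => ?_
    rw [hinner]
    rfl
  have hCS : |∑ g : SignPerm k, (inner ℝ (X g) (Y g) : ℝ)| ≤
      Real.sqrt (∑ g : SignPerm k, ‖(L'.orthogonalProjection (X g) : EuclideanSpace ℝ (∀ i, Fin (k i)))‖^2) *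
        Real.sqrt (∑ g : SignPerm k, ‖Y g‖^2) := by
    have step1 : |∑ g : SignPerm k, (inner ℝ (X g) (Y g) : ℝ)| ≤
        ∑ g : SignPerm k, ‖(L'.orthogonalProjection (X g) : EuclideanSpace ℝ (∀ i, Fin (k i)))‖ * ‖Y g‖ := by
      refine le_trans (Finset.abs_sum_le_sum_abs _ _) (Finset.sum_le_sum fun g _ => ?_)
      rw [hproj (X g) (Y g) (hmemL' g)]
      exact abs_real_inner_le_norm _ _
    refine le_trans step1 ?_
    have h2 := Finset.sum_mul_sq_le_sq_mul_sq Finset.univ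
      (fun g => ‖(L'.orthogonalProjection (X g) : EuclideanSpace ℝ (∀ i, Fin (k i)))‖) (fun g => ‖Y g‖)
    have h3 : 0 ≤ ∑ g : SignPerm k, ‖(L'.orthogonalProjection (X g) : EuclideanSpace ℝ (∀ i, Fin (k i)))‖ * ‖Y g‖ :=
      Finset.sum_nonneg fun g _ => mul_nonneg (norm_nonneg _) (norm_nonneg _)
    calc ∑ g : SignPerm k, ‖(L'.orthogonalProjection (X g) : EuclideanSpace ℝ (∀ i, Fin (k i)))‖ * ‖Y g‖
        = Real.sqrt ((∑ g : SignPerm k,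
            ‖(L'.orthogonalProjection (X g) : EuclideanSpace ℝ (∀ i, Fin (k i)))‖ * ‖Y g‖)^2) :=
          (Real.sqrt_sq h3).symm
      _ ≤ Real.sqrt ((∑ g : SignPerm k,
            ‖(L'.orthogonalProjection (X g) : EuclideanSpace ℝ (∀ i, Fin (k i)))‖^2) *
            ∑ g : SignPerm k, ‖Y g‖^2) := Real.sqrt_le_sqrt h2
      _ = _ := Real.sqrt_mul (Finset.sum_nonneg fun g _ => sq_nonneg _) _
  -- assemble
  rw [hS, abs_mul, abs_of_nonneg (by positivity : (0:ℝ) ≤ 1/N)]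
  have hT : ∑ g : SignPerm k, ∑ v, (y g v)^2 = ∑ g : SignPerm k, ‖Y g‖^2 := by
    exact Finset.sum_congr rfl fun g _ => (hYnorm g).symm
  rw [hT]
  refine le_trans (mul_le_mul_of_nonneg_left hCS (by positivity : (0:ℝ) ≤ 1/N)) ?_
  rw [hsum2]
  -- algebra with square roots
  set T : ℝ := ∑ g : SignPerm k, ‖Y g‖^2 with hTdef
  have hT0 : 0 ≤ T := Finset.sum_nonneg fun g _ => sq_nonneg _
  have hPk : 0 < ∏ j, (k j : ℝ) := Finset.prod_pos fun j _ => hkpos j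
  have hPs : 0 ≤ ∏ j, (s j : ℝ) := Finset.prod_nonneg fun j _ => by positivity
  have hcPP : c = (∏ j, (s j : ℝ)) / (∏ j, (k j : ℝ)) := by
    rw [hcdef, Finset.prod_div_distrib]
  have key := gk_alg (Real.sqrt N) (Real.sqrt (∏ j, (k j : ℝ))) (∏ j, (s j : ℝ)) (n : ℝ) T
    (Real.sqrt_pos.mpr hN) (Real.sqrt_pos.mpr hPk) hPs (Nat.cast_nonneg n) hT0
  rw [Real.sq_sqrt hN.le, Real.sq_sqrt hPk.le] at key
  rw [hcPP]
  exact le_of_eq key
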